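/- Let S = {s_0, …, s_n} ⊆ R^n be the vertex set of a regular n-dimensional simplex, i.e., n+1 points with ‖s_i − s_j‖ equal to a fixed ℓ > 0 for all i ≠ j. Then there exists δ > 0 such that every set A = {a_0, …, a_n} ⊆ R^n with ‖a_i − s_i‖ < δ for all i is Euclidean sub-p-toral for every prime p ≥ 2. -/

import Mathlib

noncomputable section AuxSubPToral

/-- Reindexing a Euclidean space along an equivalence of index types, as an isometry. -/
def euclReindex {I J : Type*} [Fintype I] [Fintype J] (e : I ≃ J) :
    EuclideanSpace ℝ I ≃ᵢ EuclideanSpace ℝ J where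
  toFun f := WithLp.toLp 2 (fun j => f (e.symm j))
  invFun g := WithLp.toLp 2 (fun i => g (e i))
  left_inv f := by ext i; show f (e.symm (e i)) = f i; rw [Equiv.symm_apply_apply]
  right_inv g := by ext j; show g (e (e.symm j)) = g j; rw [Equiv.apply_symm_apply]
  isometry_toFun := by
    intro x y
    simp only [edist_dist]
    congr 1
    rw [EuclideanSpace.dist_eq, EuclideanSpace.dist_eq]
    congr 1
    exact Equiv.sum_comp e.symm (fun i => dist (x i) (y i) ^ 2)

@[simp] theorem euclReindex_apply {I J : Type*} [Fintype I] [Fintype J] (e : I ≃ J)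
    (f : EuclideanSpace ℝ I) (j : J) : euclReindex e f j = f (e.symm j) := rfl

@[simp] theorem euclReindex_symm_apply {I J : Type*} [Fintype I] [Fintype J] (e : I ≃ J)
    (g : EuclideanSpace ℝ J) (i : I) : (euclReindex e).symm g i = g (e i) := rfl

/-- The shear permutation of `T × ZMod p` translating each fiber. -/
def shearZMod {T : Type*} (p : ℕ) (z : T → ZMod p) : (T × ZMod p) ≃ (T × ZMod p) where
  toFun q := (q.1, q.2 + z q.1)
  invFun q := (q.1, q.2 - z q.1)
  left_inv q := by simp
  right_inv q := by simp

@[simp] theorem shearZMod_symm_apply {T : Type*} (p : ℕ) (z : T → ZMod p) (q : T × ZMod p) :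
    (shearZMod p z).symm q = (q.1, q.2 - z q.1) := rfl

end AuxSubPToral

noncomputable section Aux2

variable {T : Type*} [Fintype T] {p : ℕ} [NeZero p]

def shiftIso (p : ℕ) [NeZero p] (z : T → ZMod p) :
    EuclideanSpace ℝ (T × ZMod p) ≃ᵢ EuclideanSpace ℝ (T × ZMod p) :=
  euclReindex (shearZMod p z)

@[simp] theorem shiftIso_apply (z : T → ZMod p) (f : EuclideanSpace ℝ (T × ZMod p))
    (q : T × ZMod p) : shiftIso p z f q = f (q.1, q.2 - z q.1) := rfl

def phiFun {N : ℕ} (e : (T × ZMod p) ≃ Fin N) (z : T → ZMod p) :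
    EuclideanSpace ℝ (Fin N) ≃ᵢ EuclideanSpace ℝ (Fin N) :=
  ((euclReindex e).symm.trans (shiftIso p z)).trans (euclReindex e)

theorem phiFun_apply {N : ℕ} (e : (T × ZMod p) ≃ Fin N) (z : T → ZMod p)
    (x : EuclideanSpace ℝ (Fin N)) :
    phiFun e z x = euclReindex e (shiftIso p z ((euclReindex e).symm x)) := rfl

theorem phiFun_zero {N : ℕ} (e : (T × ZMod p) ≃ Fin N) : phiFun e 0 = 1 := by
  refine IsometryEquiv.ext fun x => ?_
  rw [phiFun_apply]
  have : shiftIso p (0 : T → ZMod p) ((euclReindex e).symm x) = (euclReindex e).symm x := by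
    ext q
    show ((euclReindex e).symm x) (q.1, q.2 - 0) = ((euclReindex e).symm x) q
    rw [sub_zero]
  rw [this, IsometryEquiv.apply_symm_apply]
  rfl

theorem phiFun_add {N : ℕ} (e : (T × ZMod p) ≃ Fin N) (z w : T → ZMod p) :
    phiFun e (z + w) = phiFun e z * phiFun e w := by
  refine IsometryEquiv.ext fun x => ?_
  rw [IsometryEquiv.mul_apply, phiFun_apply, phiFun_apply, phiFun_apply,
    IsometryEquiv.symm_apply_apply]
  congr 1
  ext q
  rw [shiftIso_apply, shiftIso_apply, shiftIso_apply]
  show _ = ((euclReindex e).symm x) (q.1, q.2 - z q.1 - w q.1)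
  rw [Pi.add_apply, sub_sub]

theorem phiFun_injective {N : ℕ} (e : (T × ZMod p) ≃ Fin N) :
    Function.Injective (phiFun (p := p) e) := by
  intro z w h
  funext t
  have h2 : ∀ f : EuclideanSpace ℝ (T × ZMod p), shiftIso p z f = shiftIso p w f := by
    intro f
    have := congrArg (fun (g : EuclideanSpace ℝ (Fin N) ≃ᵢ EuclideanSpace ℝ (Fin N)) =>
      (euclReindex e).symm (g (euclReindex e f))) h
    simpa only [phiFun_apply, IsometryEquiv.symm_apply_apply] using this
  have h3 := congrArg (fun f : EuclideanSpace ℝ (T × ZMod p) => f (t, z t))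
    (h2 (WithLp.toLp 2 (fun q : T × ZMod p => ((q.2.val : ℝ)))))
  beta_reduce at h3
  rw [shiftIso_apply, shiftIso_apply] at h3
  simp only [sub_self] at h3
  have h4 : ((0 : ZMod p).val : ℝ) = ((z t - w t).val : ℝ) := h3
  have h5 : (z t - w t).val = 0 := by
    have := Nat.cast_injective (R := ℝ) h4.symm
    simpa [ZMod.val_zero] using this
  have h6 : z t - w t = 0 := (ZMod.val_eq_zero _).mp h5
  exact sub_eq_zero.mp h6

def phiHom {N : ℕ} (e : (T × ZMod p) ≃ Fin N) :
    Multiplicative (T → ZMod p) →*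
      (EuclideanSpace ℝ (Fin N) ≃ᵢ EuclideanSpace ℝ (Fin N)) where
  toFun z := phiFun e z.toAdd
  map_one' := phiFun_zero e
  map_mul' z w := phiFun_add e z.toAdd w.toAdd

theorem phiHom_injective {N : ℕ} (e : (T × ZMod p) ≃ Fin N) :
    Function.Injective (phiHom (p := p) e) := fun z w h =>
  Multiplicative.toAdd.injective (phiFun_injective e h)

def piReindexAddEquiv {T U : Type*} (p : ℕ) (e : T ≃ U) : (T → ZMod p) ≃+ (U → ZMod p) :=
  { Equiv.piCongrLeft' (fun _ => ZMod p) e with map_add' := fun f g => rfl }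

noncomputable def rangePhiIso {N : ℕ} (e : (T × ZMod p) ≃ Fin N) :
    (phiHom (p := p) e).range ≃* Multiplicative (Fin (Fintype.card T) → ZMod p) :=
  (MonoidHom.ofInjective (phiHom_injective e)).symm.trans
    (AddEquiv.toMultiplicative (piReindexAddEquiv p (Fintype.equivFin T)))

end Aux2


section SumAux

variable {α : Type*} [Fintype α] [DecidableEq α]

theorem sum_ind_fst (ρ : α × α → ℝ) (i : α) :
    ∑ t : α × α, (if t.1 = i then ρ t else 0) = ∑ l, ρ (i, l) := by
  rw [Fintype.sum_prod_type]
  have h : ∀ k : α, (∑ l, if k = i then ρ (k, l) else 0)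
      = if k = i then (∑ l, ρ (k, l)) else 0 := by
    intro k; split_ifs <;> simp
  calc ∑ k, ∑ l, (if (k, l).1 = i then ρ (k, l) else 0)
      = ∑ k, (if k = i then (∑ l, ρ (k, l)) else 0) := by
        refine Finset.sum_congr rfl fun k _ => ?_
        exact h k
    _ = ∑ l, ρ (i, l) := by rw [Finset.sum_ite_eq' Finset.univ i (fun k => ∑ l, ρ (k, l))]; simp

theorem sum_ind_snd (ρ : α × α → ℝ) (i : α) :
    ∑ t : α × α, (if t.2 = i then ρ t else 0) = ∑ k, ρ (k, i) := by
  rw [Fintype.sum_prod_type]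
  refine Finset.sum_congr rfl fun k _ => ?_
  rw [Finset.sum_ite_eq' Finset.univ i (fun l => ρ (k, l))]; simp

theorem sum_ind_both (ρ : α × α → ℝ) (i j : α) :
    ∑ t : α × α, (if t.1 = i ∧ t.2 = j then ρ t else 0) = ρ (i, j) := by
  rw [Fintype.sum_prod_type]
  have h : ∀ k : α, (∑ l, if k = i ∧ l = j then ρ (k, l) else 0)
      = if k = i then ρ (k, j) else 0 := by
    intro k
    by_cases hk : k = i
    · simp only [hk, true_and, if_true]
      rw [Finset.sum_ite_eq' Finset.univ j (fun l => ρ (i, l))]; simp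
    · simp [hk]
  calc ∑ k, ∑ l, (if ((k,l) : α × α).1 = i ∧ ((k,l) : α × α).2 = j then ρ (k, l) else 0)
      = ∑ k, (if k = i then ρ (k, j) else 0) := Finset.sum_congr rfl fun k _ => h k
    _ = ρ (i, j) := by rw [Finset.sum_ite_eq' Finset.univ i (fun k => ρ (k, j))]; simp

theorem main_sum (ρ : α × α → ℝ) (hsym : ∀ k l, ρ (k, l) = ρ (l, k))
    {i j : α} (hij : i ≠ j) :
    ∑ t : α × α, (if (t.1 = i ∨ t.2 = i) ↔ (t.1 = j ∨ t.2 = j) then 0 else 2 * ρ t)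
      = 4 * (∑ l, ρ (i, l)) + 4 * (∑ l, ρ (j, l))
          - 2 * ρ (i, i) - 2 * ρ (j, j) - 8 * ρ (i, j) := by
  have hpt : ∀ t : α × α,
      (if (t.1 = i ∨ t.2 = i) ↔ (t.1 = j ∨ t.2 = j) then 0 else 2 * ρ t)
        = 2 * (if t.1 = i then ρ t else 0) + 2 * (if t.2 = i then ρ t else 0)
            - 2 * (if t.1 = i ∧ t.2 = i then ρ t else 0)
          + (2 * (if t.1 = j then ρ t else 0) + 2 * (if t.2 = j then ρ t else 0)
            - 2 * (if t.1 = j ∧ t.2 = j then ρ t else 0))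
          - (4 * (if t.1 = i ∧ t.2 = j then ρ t else 0)
            + 4 * (if t.1 = j ∧ t.2 = i then ρ t else 0)) := by
    rintro ⟨k, l⟩
    by_cases h1 : k = i <;> by_cases h2 : l = i <;> by_cases h3 : k = j <;>
      by_cases h4 : l = j <;>
      first
        | (exfalso; exact hij (h1 ▸ h3 ▸ rfl))
        | (exfalso; exact hij (h2 ▸ h4 ▸ rfl))
        | (simp only [h1, h2, h3, h4, if_true, if_false]; simp [h1, h2, h3, h4, hij, Ne.symm hij]
           <;> ring)
  calc ∑ t : α × α, (if (t.1 = i ∨ t.2 = i) ↔ (t.1 = j ∨ t.2 = j) then 0 else 2 * ρ t)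
      = ∑ t : α × α,
          (2 * (if t.1 = i then ρ t else 0) + 2 * (if t.2 = i then ρ t else 0)
            - 2 * (if t.1 = i ∧ t.2 = i then ρ t else 0)
          + (2 * (if t.1 = j then ρ t else 0) + 2 * (if t.2 = j then ρ t else 0)
            - 2 * (if t.1 = j ∧ t.2 = j then ρ t else 0))
          - (4 * (if t.1 = i ∧ t.2 = j then ρ t else 0)
            + 4 * (if t.1 = j ∧ t.2 = i then ρ t else 0))) :=
        Finset.sum_congr rfl fun t _ => hpt t
    _ = 2 * (∑ t : α × α, (if t.1 = i then ρ t else 0))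
          + 2 * (∑ t : α × α, (if t.2 = i then ρ t else 0))
          - 2 * (∑ t : α × α, (if t.1 = i ∧ t.2 = i then ρ t else 0))
          + (2 * (∑ t : α × α, (if t.1 = j then ρ t else 0))
            + 2 * (∑ t : α × α, (if t.2 = j then ρ t else 0))
            - 2 * (∑ t : α × α, (if t.1 = j ∧ t.2 = j then ρ t else 0)))
          - (4 * (∑ t : α × α, (if t.1 = i ∧ t.2 = j then ρ t else 0))
            + 4 * (∑ t : α × α, (if t.1 = j ∧ t.2 = i then ρ t else 0))) := by
        rw [Finset.sum_sub_distrib, Finset.sum_add_distrib, Finset.sum_sub_distrib,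
          Finset.sum_add_distrib, Finset.sum_add_distrib, Finset.sum_sub_distrib,
          Finset.sum_add_distrib, ← Finset.mul_sum, ← Finset.mul_sum, ← Finset.mul_sum,
          ← Finset.mul_sum, ← Finset.mul_sum, ← Finset.mul_sum, ← Finset.mul_sum,
          ← Finset.mul_sum]
    _ = 4 * (∑ l, ρ (i, l)) + 4 * (∑ l, ρ (j, l))
          - 2 * ρ (i, i) - 2 * ρ (j, j) - 8 * ρ (i, j) := by
        rw [sum_ind_fst, sum_ind_snd, sum_ind_both, sum_ind_fst, sum_ind_snd, sum_ind_both,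
          sum_ind_both, sum_ind_both]
        have e1 : (∑ k, ρ (k, i)) = ∑ l, ρ (i, l) := Finset.sum_congr rfl fun k _ => hsym k i
        have e2 : (∑ k, ρ (k, j)) = ∑ l, ρ (j, l) := Finset.sum_congr rfl fun k _ => hsym k j
        have e3 : ρ (j, i) = ρ (i, j) := hsym j i
        rw [e1, e2, e3]
        ring

end SumAux


theorem sum_zmod_sq (p : ℕ) [NeZero p] (r : ℝ) (u v : ZMod p) :
    ∑ c : ZMod p, dist (if c = u then r else 0) (if c = v then r else 0) ^ 2
      = if u = v then 0 else 2 * r ^ 2 := by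
  by_cases huv : u = v
  · subst huv; simp
  · rw [if_neg huv]
    calc ∑ c : ZMod p, dist (if c = u then r else 0) (if c = v then r else 0) ^ 2
        = ∑ c : ZMod p, ((if c = u then r ^ 2 else 0) + (if c = v then r ^ 2 else 0)) := by
          refine Finset.sum_congr rfl fun c _ => ?_
          by_cases h1 : c = u <;> by_cases h2 : c = v
          · exact absurd (h1.symm.trans h2) huv
          · simp [h1, h2, Real.dist_eq, sq_abs, huv, Ne.symm huv]
          · simp [h1, h2, Real.dist_eq, sq_abs, huv, Ne.symm huv]
          · simp [h1, h2]
      _ = 2 * r ^ 2 := by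
          rw [Finset.sum_add_distrib, Finset.sum_ite_eq' Finset.univ u (fun _ => r ^ 2),
            Finset.sum_ite_eq' Finset.univ v (fun _ => r ^ 2)]
          simp; ring



/-- A finite set `X ⊆ ℝ^k` is *Euclidean sub-p-toral* if some isometric copy of `X`
in a possibly larger `ℝ^n` is contained in an orbit of a finite group of isometries
of `ℝ^n` isomorphic to `(ℤ/p)^α`. -/
def EuclideanSubPToral (p : ℕ) {k : ℕ} (X : Set (EuclideanSpace ℝ (Fin k))) : Prop :=
  ∃ n : ℕ, k ≤ n ∧
    ∃ ι : X → EuclideanSpace ℝ (Fin n),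
      (∀ x y : X, dist (ι x) (ι y) = dist (x : EuclideanSpace ℝ (Fin k)) y) ∧
      ∃ (G : Subgroup (EuclideanSpace ℝ (Fin n) ≃ᵢ EuclideanSpace ℝ (Fin n))) (α : ℕ),
        Nonempty (G ≃* Multiplicative (Fin α → ZMod p)) ∧
        ∃ v : EuclideanSpace ℝ (Fin n), ∀ x : X, ∃ g ∈ G,
          (g : EuclideanSpace ℝ (Fin n) ≃ᵢ EuclideanSpace ℝ (Fin n)) v = ι x

/-- **Lemma 12 (almost regular simplices are sub-p-toral for every prime).** Let
`s₀, …, s_n ∈ ℝⁿ` be the vertices of a regular simplex of side length `ℓ > 0`. Then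
there is `δ > 0` such that every `{a₀, …, a_n}` with `‖aᵢ - sᵢ‖ < δ` for all `i` is
Euclidean sub-p-toral for every prime `p`. -/
theorem almost_regular_simplex_subPToral {n : ℕ} (s : Fin (n + 1) → EuclideanSpace ℝ (Fin n))
    (ℓ : ℝ) (hℓ : 0 < ℓ) (hreg : ∀ i j : Fin (n + 1), i ≠ j → ‖s i - s j‖ = ℓ) :
    ∃ δ : ℝ, 0 < δ ∧
      ∀ a : Fin (n + 1) → EuclideanSpace ℝ (Fin n),
        (∀ i, ‖a i - s i‖ < δ) →
        ∀ p : ℕ, p.Prime → EuclideanSubPToral p (Set.range a) := by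
  classical
  have hn1 : (0:ℝ) < 16 * ((n:ℝ) + 1) := by positivity
  refine ⟨ℓ / (16 * ((n:ℝ) + 1)), by positivity, ?_⟩
  intro a ha p hp
  haveI : Fact p.Prime := ⟨hp⟩
  haveI : NeZero p := ⟨hp.ne_zero⟩
  haveI : Fact (1 < p) := ⟨hp.one_lt⟩
  set δ : ℝ := ℓ / (16 * ((n:ℝ) + 1)) with hδdef
  have hδpos : 0 < δ := by positivity
  have hℓeq : ℓ = 16 * ((n:ℝ) + 1) * δ := by
    rw [hδdef]; field_simp
  have hℓδ : 2 * δ < ℓ := by nlinarith [Nat.cast_nonneg (α := ℝ) n]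
  -- distance bounds
  have hlow : ∀ i j, i ≠ j → ℓ - 2*δ < dist (a i) (a j) := by
    intro i j hij
    have h1 : dist (s i) (s j) = ℓ := by rw [dist_eq_norm]; exact hreg i j hij
    have h2 : dist (s i) (a i) < δ := by rw [dist_comm, dist_eq_norm]; exact ha i
    have h3 : dist (a j) (s j) < δ := by rw [dist_eq_norm]; exact ha j
    have h4 := dist_triangle4 (s i) (a i) (a j) (s j)
    linarith
  have hup : ∀ i j, i ≠ j → dist (a i) (a j) < ℓ + 2*δ := by
    intro i j hij
    have h1 : dist (s i) (s j) = ℓ := by rw [dist_eq_norm]; exact hreg i j hij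
    have h2 : dist (a i) (s i) < δ := by rw [dist_eq_norm]; exact ha i
    have h3 : dist (s j) (a j) < δ := by rw [dist_comm, dist_eq_norm]; exact ha j
    have h4 := dist_triangle4 (a i) (s i) (s j) (a j)
    linarith
  set D : Fin (n+1) × Fin (n+1) → ℝ := fun t => dist (a t.1) (a t.2) ^ 2 with hDdef
  set C : ℝ := (ℓ + 2*δ)^2 with hCdef
  have hCpos : 0 < C := by positivity
  have hDsymm : ∀ k l, D (k, l) = D (l, k) := by
    intro k l; simp only [hDdef]; rw [dist_comm]
  have hDdiag : ∀ k, D (k, k) = 0 := by intro k; simp [hDdef]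
  have hDub : ∀ k l, D (k, l) ≤ C := by
    intro k l
    by_cases hkl : k = l
    · subst hkl; rw [hDdiag]; positivity
    · exact pow_le_pow_left₀ dist_nonneg (hup k l hkl).le 2
  have hDlb : ∀ k l, k ≠ l → (ℓ - 2*δ)^2 ≤ D (k, l) := by
    intro k l hkl
    exact pow_le_pow_left₀ (by linarith) (hlow k l hkl).le 2
  set R : Fin (n+1) → ℝ := fun i => ∑ l, D (i, l) with hRdef
  have hRlb : ∀ i, (n:ℝ) * (ℓ - 2*δ)^2 ≤ R i := by
    intro i
    have h0 : R i = ∑ l ∈ Finset.univ.erase i, D (i, l) := by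
      rw [hRdef]
      rw [Finset.sum_erase_eq_sub (Finset.mem_univ i), hDdiag, sub_zero]
    rw [h0]
    have hcard : (Finset.univ.erase i).card = n := by
      rw [Finset.card_erase_of_mem (Finset.mem_univ i), Finset.card_univ, Fintype.card_fin]
      rfl
    have := Finset.card_nsmul_le_sum (Finset.univ.erase i) (fun l => D (i, l)) ((ℓ - 2*δ)^2)
      (fun l hl => hDlb i l (Ne.symm (Finset.ne_of_mem_erase hl)))
    rw [hcard, nsmul_eq_mul] at this
    exact this
  have hkey : ((n:ℝ) - 1) * C ≤ (n:ℝ) * (ℓ - 2*δ)^2 := by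
    rw [hCdef, hℓeq]
    nlinarith [sq_nonneg δ, hδpos.le, Nat.cast_nonneg (α := ℝ) n,
      mul_nonneg (Nat.cast_nonneg (α := ℝ) n) (sq_nonneg δ),
      mul_nonneg (mul_nonneg (Nat.cast_nonneg (α := ℝ) n) (Nat.cast_nonneg (α := ℝ) n))
        (sq_nonneg δ)]
  set ρ : Fin (n+1) × Fin (n+1) → ℝ :=
    fun t => if t.1 = t.2 then (R t.1 - ((n:ℝ) - 1) * C) / 4 else (C - D t) / 8 with hρdef
  have hρsym : ∀ k l, ρ (k, l) = ρ (l, k) := by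
    intro k l
    by_cases hkl : k = l
    · subst hkl; rfl
    · simp only [hρdef, if_neg hkl, if_neg (Ne.symm hkl)]
      rw [hDsymm]
  have hρ0 : ∀ t, 0 ≤ ρ t := by
    rintro ⟨k, l⟩
    by_cases hkl : k = l
    · subst hkl
      simp only [hρdef, if_pos rfl]
      have := hRlb k
      have := hkey
      linarith
    · simp only [hρdef, if_neg hkl]
      have := hDub k l
      linarith
  set r : Fin (n+1) × Fin (n+1) → ℝ := fun t => Real.sqrt (ρ t) with hrdef
  have hr2 : ∀ t, r t ^ 2 = ρ t := fun t => Real.sq_sqrt (hρ0 t)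
  set τ : Fin (n+1) × Fin (n+1) → Fin (n+1) → ZMod p :=
    fun t i => if t.1 = i ∨ t.2 = i then 1 else 0 with hτdef
  have hτeq : ∀ (t : Fin (n+1) × Fin (n+1)) (i j : Fin (n+1)),
      (τ t i = τ t j) ↔ ((t.1 = i ∨ t.2 = i) ↔ (t.1 = j ∨ t.2 = j)) := by
    intro t i j
    by_cases hA : t.1 = i ∨ t.2 = i <;> by_cases hB : t.1 = j ∨ t.2 = j <;>
      simp [hτdef, hA, hB]
  -- the main identity
  have hmain : ∀ i j : Fin (n+1), i ≠ j →
      (∑ t : Fin (n+1) × Fin (n+1), if τ t i = τ t j then 0 else 2 * ρ t) = D (i, j) := by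
    intro i j hij
    have hQ : ∀ i : Fin (n+1), (∑ l, ρ (i, l)) = ρ (i, i) + ((n:ℝ) * C - R i) / 8 := by
      intro i
      have h0 : (∑ l, ρ (i, l)) = ρ (i, i) + ∑ l ∈ Finset.univ.erase i, ρ (i, l) :=
        (Finset.add_sum_erase Finset.univ (fun l => ρ (i, l)) (Finset.mem_univ i)).symm
      rw [h0]
      congr 1
      have h1 : ∀ l ∈ Finset.univ.erase i, ρ (i, l) = (C - D (i, l)) / 8 := by
        intro l hl
        simp only [hρdef, if_neg (Ne.symm (Finset.ne_of_mem_erase hl))]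
      rw [Finset.sum_congr rfl h1]
      have h2 : ∑ l ∈ Finset.univ.erase i, (C - D (i, l)) / 8
          = ((Finset.univ.erase i).card * C - ∑ l ∈ Finset.univ.erase i, D (i, l)) / 8 := by
        rw [← Finset.sum_div, Finset.sum_sub_distrib, Finset.sum_const, nsmul_eq_mul]
      rw [h2, Finset.sum_erase_eq_sub (Finset.mem_univ i), hDdiag, sub_zero,
        Finset.card_erase_of_mem (Finset.mem_univ i), Finset.card_univ, Fintype.card_fin]
      norm_num
      rfl
    have hconv : (∑ t : Fin (n+1) × Fin (n+1), if τ t i = τ t j then 0 else 2 * ρ t)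
        = ∑ t : Fin (n+1) × Fin (n+1),
            if (t.1 = i ∨ t.2 = i) ↔ (t.1 = j ∨ t.2 = j) then 0 else 2 * ρ t := by
      refine Finset.sum_congr rfl fun t _ => ?_
      exact if_congr (hτeq t i j) rfl rfl
    rw [hconv, main_sum ρ hρsym hij, hQ i, hQ j]
    have hρii : ρ (i, i) = (R i - ((n:ℝ) - 1) * C) / 4 := by simp [hρdef]
    have hρjj : ρ (j, j) = (R j - ((n:ℝ) - 1) * C) / 4 := by simp [hρdef]
    have hρij : ρ (i, j) = (C - D (i, j)) / 8 := by simp [hρdef, hij]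
    rw [hρii, hρjj, hρij]
    ring
  -- embedding vectors
  set w : Fin (n+1) → EuclideanSpace ℝ ((Fin (n+1) × Fin (n+1)) × ZMod p) :=
    fun i => WithLp.toLp 2 (fun q : (Fin (n+1) × Fin (n+1)) × ZMod p =>
      if q.2 = τ q.1 i then r q.1 else 0) with hwdef
  have hwdist : ∀ i j, dist (w i) (w j) = dist (a i) (a j) := by
    intro i j
    by_cases hij : i = j
    · subst hij; rw [dist_self, dist_self]
    · rw [EuclideanSpace.dist_eq]
      have hsum : (∑ q : (Fin (n+1) × Fin (n+1)) × ZMod p,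
          dist (w i q) (w j q) ^ 2) = D (i, j) := by
        rw [Fintype.sum_prod_type]
        have hinner : ∀ t : Fin (n+1) × Fin (n+1),
            (∑ c : ZMod p, dist (w i (t, c)) (w j (t, c)) ^ 2)
              = if τ t i = τ t j then 0 else 2 * ρ t := by
          intro t
          have h1 : (∑ c : ZMod p, dist (w i (t, c)) (w j (t, c)) ^ 2)
              = ∑ c : ZMod p, dist (if c = τ t i then r t else 0)
                  (if c = τ t j then r t else 0) ^ 2 := rfl
          rw [h1, sum_zmod_sq p (r t) (τ t i) (τ t j), hr2 t]
        rw [Finset.sum_congr rfl fun t _ => hinner t]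
        exact hmain i j hij
      rw [hsum]
      exact Real.sqrt_sq dist_nonneg
  -- ambient dimension
  set N : ℕ := Fintype.card ((Fin (n+1) × Fin (n+1)) × ZMod p) with hNdef
  set e : ((Fin (n+1) × Fin (n+1)) × ZMod p) ≃ Fin N := Fintype.equivFin _ with hedef
  refine ⟨N, ?_, ?_⟩
  · have hN : N = (n+1) * (n+1) * p := by
      rw [hNdef, Fintype.card_prod, Fintype.card_prod, Fintype.card_fin, ZMod.card]
    rw [hN]
    have h2 : 2 ≤ p := hp.two_le
    nlinarith
  · refine ⟨fun x => euclReindex e (w (Exists.choose x.2)), ?_, ?_⟩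
    · intro x y
      rw [(euclReindex e).dist_eq, hwdist, (Exists.choose_spec x.2 :),
        (Exists.choose_spec y.2 :)]
    · refine ⟨(phiHom (p := p) e).range, Fintype.card (Fin (n+1) × Fin (n+1)),
        ⟨rangePhiIso e⟩,
        euclReindex e (WithLp.toLp 2 (fun q : (Fin (n+1) × Fin (n+1)) × ZMod p =>
          if q.2 = 0 then r q.1 else 0)), ?_⟩
      intro x
      refine ⟨phiHom e (Multiplicative.ofAdd (fun t => τ t (Exists.choose x.2))),
        ⟨Multiplicative.ofAdd (fun t => τ t (Exists.choose x.2)), rfl⟩, ?_⟩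
      show phiFun e (fun t => τ t (Exists.choose x.2))
          (euclReindex e (WithLp.toLp 2 (fun q : (Fin (n+1) × Fin (n+1)) × ZMod p =>
            if q.2 = 0 then r q.1 else 0)))
        = euclReindex e (w (Exists.choose x.2))
      rw [phiFun_apply, IsometryEquiv.symm_apply_apply]
      congr 1
      ext q
      rw [shiftIso_apply]
      show (if q.2 - τ q.1 (Exists.choose x.2) = 0 then r q.1 else 0)
        = (if q.2 = τ q.1 (Exists.choose x.2) then r q.1 else 0)
      rw [if_congr sub_eq_zero rfl rfl]
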